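/- Let L be a number field and let α ∈ L satisfy 2α ∈ O_L and α ≠ 1/2. Then Σ_σ (|σ(α)|² − Re σ(α)) ≥ 0 and Σ_σ |σ(α) − 1/3|² ≥ [L:ℚ]/9, where both sums range over all field embeddings σ : L → ℂ. -/

import Mathlib

open NumberField

/-- Product of absolute values of embeddings equals the absolute value of the norm. -/
lemma prod_abs_eq_abs_norm (L : Type*) [Field L] [NumberField L] (x : L) :
    ∏ σ : L →+* ℂ, ‖σ x‖ = |Algebra.norm ℚ x| := by
  have h := congr_arg (‖·‖) (Algebra.norm_eq_prod_embeddings ℚ ℂ (x := x))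
  rw [norm_prod] at h
  have e : ∏ σ : L →+* ℂ, ‖σ x‖ = ∏ φ : L →ₐ[ℚ] ℂ, ‖φ x‖ :=
    Fintype.prod_equiv (RingHom.equivRatAlgHom L ℂ) _ _ (fun σ => by
      simp [RingHom.equivRatAlgHom_apply])
  rw [e, ← h, eq_ratCast, Complex.norm_ratCast, Rat.cast_abs]

/-- For a nonzero algebraic integer `x` in a number field, `Σ_σ |σ x|² ≥ [L:ℚ]`. -/
lemma sum_sq_abs_ge (L : Type*) [Field L] [NumberField L] (x : L)
    (hx : IsIntegral ℤ x) (hx0 : x ≠ 0) :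
    (Module.finrank ℚ L : ℝ) ≤ ∑ σ : L →+* ℂ, ‖σ x‖ ^ 2 := by
  have hn : Fintype.card (L →+* ℂ) = Module.finrank ℚ L := NumberField.Embeddings.card L ℂ
  set n : ℕ := Module.finrank ℚ L with hndef
  have hnpos : 0 < n := Module.finrank_pos
  -- the norm has absolute value ≥ 1
  have hnorm : (1 : ℚ) ≤ |Algebra.norm ℚ x| := by
    obtain ⟨m, hm⟩ := IsIntegrallyClosed.isIntegral_iff.mp (Algebra.isIntegral_norm ℚ hx)
    have hne : Algebra.norm ℚ x ≠ 0 := by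
      rw [Algebra.norm_ne_zero_iff]; exact hx0
    rw [← hm] at hne ⊢
    rw [eq_intCast] at hne ⊢
    have hm0 : m ≠ 0 := by exact_mod_cast hne
    rw [← Int.cast_abs]
    exact_mod_cast Int.one_le_abs hm0
  have hprod : (1 : ℝ) ≤ ∏ σ : L →+* ℂ, ‖σ x‖ ^ 2 := by
    rw [Finset.prod_pow]
    calc (1 : ℝ) = 1 ^ 2 := by norm_num
    _ ≤ (∏ σ : L →+* ℂ, ‖σ x‖) ^ 2 := by
        apply pow_le_pow_left₀ (by norm_num)
        rw [prod_abs_eq_abs_norm]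
        exact_mod_cast hnorm
  -- AM-GM
  have hAM := Real.geom_mean_le_arith_mean_weighted Finset.univ
      (fun _ : L →+* ℂ => (n : ℝ)⁻¹) (fun σ => ‖σ x‖ ^ 2)
      (fun _ _ => by positivity)
      (by rw [Finset.sum_const, Finset.card_univ, hn, nsmul_eq_mul]
          field_simp)
      (fun _ _ => by positivity)
  have hgeo : (1 : ℝ) ≤ ∏ σ : L →+* ℂ, (‖σ x‖ ^ 2) ^ ((n : ℝ)⁻¹) := by
    rw [Real.finset_prod_rpow _ _ (fun _ _ => by positivity)]
    exact Real.one_le_rpow hprod (by positivity)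
  have hsum : (1 : ℝ) ≤ ∑ σ : L →+* ℂ, (n : ℝ)⁻¹ * (‖σ x‖ ^ 2) :=
    le_trans hgeo hAM
  rw [← Finset.mul_sum] at hsum
  have hn' : (0 : ℝ) < n := by exact_mod_cast hnpos
  calc (n : ℝ) = n * 1 := by ring
  _ ≤ n * ((n : ℝ)⁻¹ * ∑ σ : L →+* ℂ, ‖σ x‖ ^ 2) := by
      exact mul_le_mul_of_nonneg_left hsum (le_of_lt hn')
  _ = ∑ σ : L →+* ℂ, ‖σ x‖ ^ 2 := by field_simp

/-- For `α ∈ ½𝓞_L` with `α ≠ 1/2`: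
`Σ_σ (|σ(α)|² − Re σ(α)) ≥ 0` and `Σ_σ |σ(α) − 1/3|² ≥ [L:ℚ]/9`. -/
theorem statement2 (L : Type*) [Field L] [NumberField L] (α : L)
    (h2 : IsIntegral ℤ (2 * α)) (hα : α ≠ 1 / 2) :
    (0 ≤ ∑ σ : L →+* ℂ, (‖σ α‖ ^ 2 - (σ α).re)) ∧
      ((Module.finrank ℚ L : ℝ) / 9 ≤ ∑ σ : L →+* ℂ, ‖σ α - 1 / 3‖ ^ 2) := by
  set n : ℕ := Module.finrank ℚ L with hndef
  have hn : Fintype.card (L →+* ℂ) = n := NumberField.Embeddings.card L ℂ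
  set x : L := 2 * α - 1 with hxdef
  have hxint : IsIntegral ℤ x := h2.sub isIntegral_one
  have hx0 : x ≠ 0 := by
    intro h
    apply hα
    have : (2 : L) * α = 1 := by linear_combination h
    field_simp
    linear_combination this
  have hS1 : (n : ℝ) ≤ ∑ σ : L →+* ℂ, ‖σ x‖ ^ 2 := sum_sq_abs_ge L x hxint hx0
  -- per-term identities
  have key1 : ∀ σ : L →+* ℂ, ‖σ α‖ ^ 2 - (σ α).re
      = (‖σ x‖ ^ 2 - 1) / 4 := by
    intro σ
    have hσx : σ x = 2 * σ α - 1 := by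
      rw [hxdef]; push_cast [map_sub, map_mul, map_ofNat, map_one]; ring
    rw [hσx, Complex.sq_norm, Complex.sq_norm, Complex.normSq_apply, Complex.normSq_apply]
    simp [Complex.sub_re, Complex.sub_im, Complex.mul_re, Complex.mul_im]
    ring
  have key2 : ∀ σ : L →+* ℂ, ‖σ α - 1 / 3‖ ^ 2
      = 1 / 9 + (‖σ x‖ ^ 2 - 1) / 6 + ‖σ (2 * α)‖ ^ 2 / 12 := by
    intro σ
    have hσx : σ x = 2 * σ α - 1 := by
      rw [hxdef]; push_cast [map_sub, map_mul, map_ofNat, map_one]; ring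
    have hσy : σ (2 * α) = 2 * σ α := by
      push_cast [map_mul, map_ofNat]; ring
    rw [hσx, hσy, Complex.sq_norm, Complex.sq_norm, Complex.sq_norm,
      Complex.normSq_apply, Complex.normSq_apply, Complex.normSq_apply]
    simp [Complex.sub_re, Complex.sub_im, Complex.mul_re, Complex.mul_im,
      Complex.div_re, Complex.div_im, Complex.normSq_apply]
    ring
  constructor
  · rw [Finset.sum_congr rfl (fun σ _ => key1 σ)]
    have : ∑ σ : L →+* ℂ, (‖σ x‖ ^ 2 - 1) / 4
        = ((∑ σ : L →+* ℂ, ‖σ x‖ ^ 2) - n) / 4 := by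
      rw [← Finset.sum_div, Finset.sum_sub_distrib, Finset.sum_const, Finset.card_univ, hn,
        nsmul_eq_mul, mul_one]
    rw [this]
    have := sub_nonneg.mpr hS1
    positivity
  · rw [Finset.sum_congr rfl (fun σ _ => key2 σ)]
    rw [Finset.sum_add_distrib, Finset.sum_add_distrib, Finset.sum_const, Finset.card_univ, hn]
    have h1 : (0 : ℝ) ≤ ∑ σ : L →+* ℂ, (‖σ x‖ ^ 2 - 1) / 6 := by
      rw [← Finset.sum_div, Finset.sum_sub_distrib, Finset.sum_const, Finset.card_univ, hn,
        nsmul_eq_mul, mul_one]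
      have := sub_nonneg.mpr hS1
      positivity
    have h2' : (0 : ℝ) ≤ ∑ σ : L →+* ℂ, ‖σ (2 * α)‖ ^ 2 / 12 := by
      apply Finset.sum_nonneg; intro σ _; positivity
    rw [nsmul_eq_mul]
    linarith [h1, h2']
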